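/- If I is a monomial ideal of A such that M(I) is finite and nonempty, then the survival complex of A/I has an isolated point: there exists a ∈ M(I) such that X^{a+b} ∈ I for every b ∈ M(I) with b ≠ a. -/

import Mathlib

open MvPolynomial

/-- An ideal of `k[X_1,…,X_n]` is a *monomial ideal* if it is generated by a set
of monomials. -/
def IsMonomialIdeal {k : Type*} [Field k] {n : ℕ}
    (I : Ideal (MvPolynomial (Fin n) k)) : Prop :=
  ∃ S : Set ((Fin n) →₀ ℕ),
    I = Ideal.span ((fun a => (monomial a (1 : k) : MvPolynomial (Fin n) k)) '' S)

/-- `M(I)`: the set of nonzero exponent vectors whose monomial survives in `A/I`;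
these are the vertices of the survival complex. -/
def survivors {k : Type*} [Field k] {n : ℕ}
    (I : Ideal (MvPolynomial (Fin n) k)) : Set ((Fin n) →₀ ℕ) :=
  {a | a ≠ 0 ∧ monomial a (1 : k) ∉ I}

/-- If `I` is a monomial ideal with `M(I)` finite and nonempty, then the survival
complex of `A/I` has an isolated point. -/
theorem survival_complex_has_isolated_point
    {k : Type*} [Field k] {n : ℕ} (hn : 1 ≤ n)
    (I : Ideal (MvPolynomial (Fin n) k)) (hI : IsMonomialIdeal I)
    (hfin : (survivors I).Finite) (hne : (survivors I).Nonempty) :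
    ∃ a ∈ survivors I, ∀ b ∈ survivors I, b ≠ a →
      monomial (a + b) (1 : k) ∈ I := by
  classical
  obtain ⟨a, haS, hmax⟩ :=
    Set.Finite.exists_maximalFor (fun a : (Fin n) →₀ ℕ => ∑ i, a i) _ hfin hne
  refine ⟨a, haS, fun b hb _ => ?_⟩
  by_contra h
  have hab : a + b ∈ survivors I := by
    refine ⟨fun h0 => haS.1 ((add_eq_zero.mp h0).1), h⟩
  have hle : (∑ i, a i) ≤ ∑ i, (a + b) i := by
    simp only [Finsupp.add_apply, Finset.sum_add_distrib]
    exact Nat.le_add_right _ _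
  have heq := hmax hab hle
  have hbpos : 0 < ∑ i, b i := by
    obtain ⟨i, hi⟩ := Finsupp.ne_iff.mp hb.1
    exact lt_of_lt_of_le (Nat.pos_of_ne_zero (by simpa using hi))
      (Finset.single_le_sum (fun _ _ => Nat.zero_le _) (Finset.mem_univ i))
  simp only [Finsupp.add_apply, Finset.sum_add_distrib] at heq
  omega
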